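/- Let 4/3 ≤ r < 2 and c2>0. There exists C>0, depending only on r and c2, such that for all positive reals κ0, κg, κf⁺, κ_ε, Sc, G with κ0 ≤ κg < κ_ε, κ0 ≤ κf⁺, G ≥ 1, Sc ≥ e, Sc ≥ G^{(3r−4)/(8−4r)}, κ_ε ≤ c2·κ0·(κ0/κf⁺)^{1/8}·G^{3/8}, and κ'_β = Sc^{1/2}·κ_ε, one has (κ'_β)^{-4/3}·Sc^{-1/3}·(κg^{-2/3} − κ_ε^{-2/3}) ≤ C·(κ'_β)^{-r}·κ0^{r−2}·ln Sc. (The key inequality in the proof of the second part of Theorem 6.1.) -/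

import Mathlib

open Real

/-- The key inequality in the proof of the second part of Theorem 6.1. -/
theorem tracer_3D_key_inequality
    (r c2 : ℝ) (hr1 : 4 / 3 ≤ r) (hr2 : r < 2) (hc2 : 0 < c2) :
    ∃ C : ℝ, 0 < C ∧
      ∀ κ0 κg κfp κε Sc G κβ' : ℝ,
        0 < κ0 → 0 < κg → 0 < κfp → 0 < κε → 0 < Sc → 0 < G →
        κ0 ≤ κg → κg < κε → κ0 ≤ κfp →
        1 ≤ G → Real.exp 1 ≤ Sc →
        G ^ ((3 * r - 4) / (8 - 4 * r)) ≤ Sc →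
        κε ≤ c2 * κ0 * (κ0 / κfp) ^ (1 / 8 : ℝ) * G ^ (3 / 8 : ℝ) →
        κβ' = Sc ^ (1 / 2 : ℝ) * κε →
        κβ' ^ (-4 / 3 : ℝ) * Sc ^ (-1 / 3 : ℝ) * (κg ^ (-2 / 3 : ℝ) - κε ^ (-2 / 3 : ℝ)) ≤
          C * κβ' ^ (-r) * κ0 ^ (r - 2) * Real.log Sc := by
  refine ⟨c2 ^ (r - 4 / 3 : ℝ), Real.rpow_pos_of_pos hc2 _, ?_⟩
  intro κ0 κg κfp κε Sc G κβ' h0 hg hfp hε hSc hG h0g hgε h0fp hG1 heSc hGSc hεb hβ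
  have ha : (0:ℝ) ≤ r - 4 / 3 := by linarith
  have hβpos : 0 < κβ' := by
    rw [hβ]; exact mul_pos (Real.rpow_pos_of_pos hSc _) hε
  have hSc1 : (1:ℝ) ≤ Sc := le_trans (by linarith [Real.add_one_le_exp 1] : (1:ℝ) ≤ Real.exp 1) heSc
  have hlog : (1:ℝ) ≤ Real.log Sc := by
    have := Real.log_le_log (Real.exp_pos 1) heSc
    rwa [Real.log_exp] at this
  -- bound κβ' by c2 * κ0 * Sc^(1/2) * G^(3/8)
  have hfrac : (κ0 / κfp) ^ (1 / 8 : ℝ) ≤ 1 :=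
    Real.rpow_le_one (by positivity) (div_le_one_of_le₀ h0fp hfp.le) (by norm_num)
  have h1 : κβ' ≤ c2 * κ0 * Sc ^ (1/2 : ℝ) * G ^ (3/8 : ℝ) := by
    rw [hβ]
    calc Sc ^ (1/2 : ℝ) * κε
        ≤ Sc ^ (1/2 : ℝ) * (c2 * κ0 * (κ0 / κfp) ^ (1 / 8 : ℝ) * G ^ (3 / 8 : ℝ)) := by
          apply mul_le_mul_of_nonneg_left hεb (by positivity)
      _ ≤ Sc ^ (1/2 : ℝ) * (c2 * κ0 * 1 * G ^ (3 / 8 : ℝ)) := by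
          apply mul_le_mul_of_nonneg_left _ (by positivity)
          apply mul_le_mul_of_nonneg_right _ (by positivity)
          calc c2 * κ0 * (κ0 / κfp) ^ (1 / 8 : ℝ) ≤ c2 * κ0 * 1 :=
            mul_le_mul_of_nonneg_left hfrac (by positivity)
          _ = c2 * κ0 * 1 := rfl
      _ = c2 * κ0 * Sc ^ (1/2 : ℝ) * G ^ (3/8 : ℝ) := by ring
  -- key bound: κβ'^(r-4/3) * κ0^(4/3-r) ≤ C * Sc^(1/3)
  have h2 : κβ' ^ (r - 4/3 : ℝ) ≤ (c2 * κ0 * Sc ^ (1/2 : ℝ) * G ^ (3/8 : ℝ)) ^ (r - 4/3 : ℝ) :=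
    Real.rpow_le_rpow hβpos.le h1 ha
  have h3 : (c2 * κ0 * Sc ^ (1/2 : ℝ) * G ^ (3/8 : ℝ)) ^ (r - 4/3 : ℝ)
      = c2 ^ (r - 4/3 : ℝ) * κ0 ^ (r - 4/3 : ℝ) * Sc ^ ((r - 4/3)/2 : ℝ)
        * G ^ (3 * (r - 4/3) / 8 : ℝ) := by
    rw [Real.mul_rpow (by positivity) (by positivity),
        Real.mul_rpow (by positivity) (by positivity),
        Real.mul_rpow (by positivity) (by positivity)]
    rw [← Real.rpow_mul hSc.le, ← Real.rpow_mul hG.le]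
    congr 2
    · ring
    · ring
  have h4 : G ^ (3 * (r - 4/3) / 8 : ℝ) ≤ Sc ^ ((2 - r)/2 : ℝ) := by
    have hq : (0:ℝ) ≤ (2 - r)/2 := by linarith
    have := Real.rpow_le_rpow (Real.rpow_nonneg hG.le _) hGSc hq
    rw [← Real.rpow_mul hG.le] at this
    have hexp : (3 * r - 4) / (8 - 4 * r) * ((2 - r)/2) = 3 * (r - 4/3) / 8 := by
      have h8 : (8 - 4 * r) ≠ 0 := by linarith
      rw [div_mul_eq_mul_div, div_eq_iff h8]
      ring
    rwa [hexp] at this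
  have h5 : Sc ^ ((r - 4/3)/2 : ℝ) * Sc ^ ((2 - r)/2 : ℝ) = Sc ^ (1/3 : ℝ) := by
    rw [← Real.rpow_add hSc]
    congr 1
    ring
  have hkey : κβ' ^ (r - 4/3 : ℝ) * κ0 ^ (4/3 - r : ℝ) ≤ c2 ^ (r - 4/3 : ℝ) * Sc ^ (1/3 : ℝ) := by
    have h6 : κβ' ^ (r - 4/3 : ℝ)
        ≤ c2 ^ (r - 4/3 : ℝ) * κ0 ^ (r - 4/3 : ℝ) * Sc ^ ((r - 4/3)/2 : ℝ)
          * Sc ^ ((2 - r)/2 : ℝ) := by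
      calc κβ' ^ (r - 4/3 : ℝ) ≤ _ := h2
        _ = _ := h3
        _ ≤ c2 ^ (r - 4/3 : ℝ) * κ0 ^ (r - 4/3 : ℝ) * Sc ^ ((r - 4/3)/2 : ℝ)
              * Sc ^ ((2 - r)/2 : ℝ) := by
          apply mul_le_mul_of_nonneg_left h4 (by positivity)
    calc κβ' ^ (r - 4/3 : ℝ) * κ0 ^ (4/3 - r : ℝ)
        ≤ (c2 ^ (r - 4/3 : ℝ) * κ0 ^ (r - 4/3 : ℝ) * Sc ^ ((r - 4/3)/2 : ℝ)
            * Sc ^ ((2 - r)/2 : ℝ)) * κ0 ^ (4/3 - r : ℝ) :=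
          mul_le_mul_of_nonneg_right h6 (by positivity)
      _ = c2 ^ (r - 4/3 : ℝ) * Sc ^ (1/3 : ℝ)
            * (κ0 ^ (r - 4/3 : ℝ) * κ0 ^ (4/3 - r : ℝ)) := by
          rw [← h5]; ring
      _ = c2 ^ (r - 4/3 : ℝ) * Sc ^ (1/3 : ℝ) := by
          rw [← Real.rpow_add h0]
          norm_num
  -- now the final chain
  have hsubκ : κg ^ (-2/3 : ℝ) - κε ^ (-2/3 : ℝ) ≤ κ0 ^ (-2/3 : ℝ) := by
    have h7 : κg ^ (-2/3 : ℝ) ≤ κ0 ^ (-2/3 : ℝ) :=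
      Real.rpow_le_rpow_of_nonpos h0 h0g (by norm_num)
    have h8 : (0:ℝ) ≤ κε ^ (-2/3 : ℝ) := by positivity
    linarith
  have hfactor : κβ' ^ (-4/3 : ℝ) * Sc ^ (-1/3 : ℝ) * κ0 ^ (-2/3 : ℝ)
      = (κβ' ^ (-r) * κ0 ^ (r - 2) * Sc ^ (-1/3 : ℝ))
        * (κβ' ^ (r - 4/3 : ℝ) * κ0 ^ (4/3 - r : ℝ)) := by
    rw [show (κβ' ^ (-r) * κ0 ^ (r - 2) * Sc ^ (-1/3 : ℝ))
          * (κβ' ^ (r - 4/3 : ℝ) * κ0 ^ (4/3 - r : ℝ))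
        = (κβ' ^ (-r) * κβ' ^ (r - 4/3 : ℝ)) * (κ0 ^ (r - 2) * κ0 ^ (4/3 - r : ℝ))
          * Sc ^ (-1/3 : ℝ) by ring,
      ← Real.rpow_add hβpos, ← Real.rpow_add h0,
      show -r + (r - 4/3) = (-4/3 : ℝ) by ring,
      show (r - 2) + (4/3 - r) = (-2/3 : ℝ) by ring]
    ring
  calc κβ' ^ (-4/3 : ℝ) * Sc ^ (-1/3 : ℝ) * (κg ^ (-2/3 : ℝ) - κε ^ (-2/3 : ℝ))
      ≤ κβ' ^ (-4/3 : ℝ) * Sc ^ (-1/3 : ℝ) * κ0 ^ (-2/3 : ℝ) :=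
        mul_le_mul_of_nonneg_left hsubκ (by positivity)
    _ = (κβ' ^ (-r) * κ0 ^ (r - 2) * Sc ^ (-1/3 : ℝ))
          * (κβ' ^ (r - 4/3 : ℝ) * κ0 ^ (4/3 - r : ℝ)) := hfactor
    _ ≤ (κβ' ^ (-r) * κ0 ^ (r - 2) * Sc ^ (-1/3 : ℝ))
          * (c2 ^ (r - 4/3 : ℝ) * Sc ^ (1/3 : ℝ)) :=
        mul_le_mul_of_nonneg_left hkey (by positivity)
    _ = c2 ^ (r - 4/3 : ℝ) * κβ' ^ (-r) * κ0 ^ (r - 2)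
          * (Sc ^ (-1/3 : ℝ) * Sc ^ (1/3 : ℝ)) := by ring
    _ = c2 ^ (r - 4/3 : ℝ) * κβ' ^ (-r) * κ0 ^ (r - 2) := by
        rw [← Real.rpow_add hSc]; norm_num
    _ ≤ c2 ^ (r - 4/3 : ℝ) * κβ' ^ (-r) * κ0 ^ (r - 2) * Real.log Sc := by
        have hX : (0:ℝ) < c2 ^ (r - 4/3 : ℝ) * κβ' ^ (-r) * κ0 ^ (r - 2) := by positivity
        exact le_mul_of_one_le_right hX.le hlog
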